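/- Let $a > 1$ and let $n \in \mathbb{N}_0$ with $n < a$. Write $w = -1 + re^{i\theta}$ with $0 < r < \delta < 1$ and $\theta \in (-\pi/2,\pi/2)$. Then $\int_0^1 \frac{t^n}{|1+w(1-t)|^{a+1}}\,dt \le C_{a,n}\, |1+w|^{n-a}$ where $C_{a,n} = \frac{5^{(a+1)/2}\,\Gamma(a-n)\Gamma(n+1)}{\Gamma(a+1)}$. -/

import Mathlib

open MeasureTheory intervalIntegral Set

private lemma sq_bound9 (r t c : ℝ) (hr : 0 < r) (hr1 : r < 1) (ht : 0 ≤ t) (ht1 : t ≤ 1) (hc : 0 ≤ c) :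
    (r + t)^2 ≤ 5 * (t^2 + 2*t*(r*(1-t))*c + (r*(1-t))^2) := by
  nlinarith [sq_nonneg ((4+5*r^2)*t - r*(1+5*r)),
    mul_nonneg (mul_nonneg (mul_nonneg hr.le hr.le) (by linarith : (0:ℝ) ≤ 3 + r)) (by linarith : (0:ℝ) ≤ 1 - r),
    mul_nonneg (mul_nonneg (mul_nonneg (by linarith : (0:ℝ) ≤ 2*t) hr.le) (by linarith : (0:ℝ) ≤ 1 - t)) hc,
    sq_nonneg r, sq_nonneg t]

private lemma abs_lower9 (r t θ : ℝ) (hr : 0 < r) (hr1 : r < 1) (ht : 0 ≤ t) (ht1 : t ≤ 1)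
    (hc : 0 ≤ Real.cos θ) :
    (r + t) / Real.sqrt 5 ≤ ‖(↑t + ↑(r*(1-t)) * Complex.exp (↑θ * Complex.I) : ℂ)‖ := by
  have hz : (↑t + ↑(r*(1-t)) * Complex.exp (↑θ * Complex.I) : ℂ)
      = ↑(t + r*(1-t)*Real.cos θ) + ↑(r*(1-t)*Real.sin θ) * Complex.I := by
    rw [Complex.exp_mul_I]
    push_cast
    ring
  rw [hz, Complex.norm_add_mul_I]
  rw [show (r+t)/Real.sqrt 5 = Real.sqrt ((r+t)^2/5) by
    rw [Real.sqrt_div (by positivity), Real.sqrt_sq (by linarith)]]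
  apply Real.sqrt_le_sqrt
  nlinarith [sq_bound9 r t (Real.cos θ) hr hr1 ht ht1 hc, Real.sin_sq_add_cos_sq θ]

private lemma betaInt9 (a : ℝ) (n : ℕ) (hn : (n:ℝ) < a) :
    IntervalIntegrable (fun u : ℝ => u ^ n * (1 - u) ^ (a - n - 1)) volume 0 1 := by
  have h0 : IntervalIntegrable (fun x : ℝ => x ^ (a - n - 1)) volume 1 0 :=
    intervalIntegral.intervalIntegrable_rpow' (by linarith)
  have h1 : IntervalIntegrable (fun x : ℝ => (1 - x) ^ (a - n - 1)) volume (1-1) (1-0) :=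
    h0.comp_sub_left 1
  simp only [sub_self, sub_zero] at h1
  exact h1.continuousOn_mul (by fun_prop)

private lemma betaVal9 (a : ℝ) (n : ℕ) (hn : (n:ℝ) < a) :
    ∫ u in (0:ℝ)..1, u ^ n * (1 - u) ^ (a - n - 1) =
      Real.Gamma (n + 1) * Real.Gamma (a - n) / Real.Gamma (a + 1) := by
  have hG : 0 < Real.Gamma (a + 1) := Real.Gamma_pos_of_pos (by linarith)
  have h1 : Complex.Gamma ((n:ℂ) + 1) * Complex.Gamma ((a:ℂ) - n) =
      Complex.Gamma (((n:ℂ)+1) + ((a:ℂ) - n)) * Complex.betaIntegral ((n:ℂ)+1) ((a:ℂ) - n) :=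
    Complex.Gamma_mul_Gamma_eq_betaIntegral (by simp; positivity) (by simp [Complex.sub_re]; linarith)
  have h2 : Complex.betaIntegral ((n:ℂ)+1) ((a:ℂ) - n) =
      ((∫ u in (0:ℝ)..1, u ^ n * (1 - u) ^ (a - n - 1) : ℝ) : ℂ) := by
    rw [← intervalIntegral.integral_ofReal, Complex.betaIntegral]
    refine intervalIntegral.integral_congr fun x hx => ?_
    rw [uIcc_of_le (by norm_num)] at hx
    push_cast
    rw [add_sub_cancel_right, Complex.cpow_natCast,
      show ((a:ℂ) - n - 1) = ((a - n - 1 : ℝ) : ℂ) by push_cast; ring,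
      ← Complex.ofReal_one, ← Complex.ofReal_sub,
      ← Complex.ofReal_cpow (by linarith [hx.2]), ← Complex.ofReal_pow, ← Complex.ofReal_mul]
  rw [h2] at h1
  have h3 : (((n:ℂ)+1) + ((a:ℂ) - n)) = ((a + 1 : ℝ) : ℂ) := by push_cast; ring
  have h4 : ((n:ℂ) + 1) = ((n + 1 : ℝ) : ℂ) := by push_cast; ring
  have h5 : ((a:ℂ) - n) = ((a - n : ℝ) : ℂ) := by push_cast; ring
  rw [h3, h4, h5, Complex.Gamma_ofReal, Complex.Gamma_ofReal, Complex.Gamma_ofReal] at h1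
  have := h1
  rw [← Complex.ofReal_mul, ← Complex.ofReal_mul, Complex.ofReal_inj] at this
  field_simp
  linarith [this]

private lemma subst_lemma9 (a r : ℝ) (n : ℕ) (hr : 0 < r) :
    ∫ t in (0:ℝ)..1, t ^ n / (r + t) ^ (a + 1) =
      r ^ ((n:ℝ) - a) * ∫ u in (0:ℝ)..(1/(r+1)), u ^ n * (1 - u) ^ (a - n - 1) := by
  set G : ℝ → ℝ := fun u => u ^ n * (1 - u) ^ (a - n - 1) with hG
  set f : ℝ → ℝ := fun t => t / (r + t) with hf
  have hderiv : ∀ t ∈ uIcc (0:ℝ) 1, HasDerivAt f (r / (r + t) ^ 2) t := by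
    intro t ht
    rw [uIcc_of_le (by norm_num)] at ht
    have hs : r + t ≠ 0 := by nlinarith [ht.1]
    have := (hasDerivAt_id t).div ((hasDerivAt_id t).const_add r) hs
    exact this.congr_deriv (by simp only [id_eq, one_mul, mul_one, add_sub_cancel_right])
  have hcont : ContinuousOn (fun t => r / (r + t) ^ 2) (uIcc (0:ℝ) 1) := by
    rw [uIcc_of_le (by norm_num)]
    apply ContinuousOn.div continuousOn_const (by fun_prop)
    intro t ht
    have : 0 < r + t := by nlinarith [ht.1]
    positivity
  have hsub : f '' uIcc (0:ℝ) 1 ⊆ Iio 1 := by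
    rintro _ ⟨t, ht, rfl⟩
    rw [uIcc_of_le (by norm_num)] at ht
    have : 0 < r + t := by nlinarith [ht.1]
    simp only [hf, mem_Iio]
    rw [div_lt_one this]
    linarith [ht.1]
  have hGcont : ContinuousOn G (Iio 1) := by
    apply ContinuousOn.mul (by fun_prop)
    intro u hu
    apply ContinuousAt.continuousWithinAt
    exact (Real.continuousAt_rpow_const (1-u) _ (Or.inl (by simp at hu; intro h; nlinarith))).comp
      ((continuous_const.sub continuous_id).continuousAt)
  have key := intervalIntegral.integral_comp_smul_deriv' hderiv hcont (hGcont.mono hsub)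
  have hf0 : f 0 = 0 := by simp [hf]
  have hf1 : f 1 = 1 / (r + 1) := by simp [hf]
  rw [hf0, hf1] at key
  rw [← key, ← intervalIntegral.integral_const_mul]
  refine intervalIntegral.integral_congr fun t ht => ?_
  rw [uIcc_of_le (by norm_num)] at ht
  have hs : 0 < r + t := by nlinarith [ht.1]
  show t ^ n / (r + t) ^ (a + 1) = r ^ ((n:ℝ) - a) * ((r / (r + t) ^ 2) • ((f t) ^ n * (1 - f t) ^ (a - n - 1)))
  have h1f : 1 - f t = r / (r + t) := by
    simp only [hf]
    field_simp
    ring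
  rw [smul_eq_mul, h1f]
  simp only [hf]
  rw [div_pow, Real.div_rpow hr.le hs.le]
  have e2 : (r + t) ^ (a + 1) = (r+t) ^ (n:ℕ) * (r+t) ^ (2:ℕ) * (r+t) ^ (a - n - 1) := by
    rw [show ((r+t) ^ (n:ℕ) : ℝ) = (r+t) ^ (n:ℝ) from (Real.rpow_natCast _ n).symm,
      show ((r+t) ^ (2:ℕ) : ℝ) = (r+t) ^ (2:ℝ) from (Real.rpow_natCast _ 2).symm,
      ← Real.rpow_add hs, ← Real.rpow_add hs]
    ring_nf
  have e1 : r ^ ((n:ℝ) - a) * r * r ^ (a - n - 1) = 1 := by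
    rw [mul_assoc, mul_comm r _, ← Real.rpow_add_one hr.ne', ← Real.rpow_add hr,
      show (n:ℝ) - a + (a - ↑n - 1 + 1) = 0 by ring, Real.rpow_zero]
  rw [div_mul_div_comm, div_mul_div_comm, ← mul_div_assoc]
  rw [div_eq_div_iff (by positivity) (by positivity)]
  linear_combination (-(t^n * ((r+t)^(2:ℕ) * (r+t)^(n:ℕ) * (r+t)^(a-(n:ℝ)-1)))) * e1
    + (-(r^((n:ℝ)-a) * r * r^(a-(n:ℝ)-1) * t^n)) * e2

theorem stmt_9 (a δ r θ : ℝ) (n : ℕ) (ha : a > 1) (hn : (n : ℝ) < a)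
    (hr : 0 < r) (hrδ : r < δ) (hδ : δ < 1)
    (hθ : θ ∈ Set.Ioo (-(Real.pi / 2)) (Real.pi / 2))
    (w : ℂ) (hw : w = -1 + (r : ℂ) * Complex.exp (θ * Complex.I)) :
    ∫ t in (0 : ℝ)..1, t ^ n / ‖1 + w * (1 - (t : ℂ))‖ ^ (a + 1) ≤
      (5 ^ ((a + 1) / 2) * Real.Gamma (a - n) * Real.Gamma (n + 1) / Real.Gamma (a + 1)) *
        ‖1 + w‖ ^ ((n : ℝ) - a) := by
  have hc : 0 < Real.cos θ := Real.cos_pos_of_mem_Ioo hθ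
  have hr1 : r < 1 := hrδ.trans hδ
  have habs : ‖1 + w‖ = r := by
    have h : (1 : ℂ) + w = ↑r * Complex.exp (↑θ * Complex.I) := by rw [hw]; ring
    rw [h, norm_mul, Complex.norm_real, Complex.norm_exp_ofReal_mul_I, mul_one, Real.norm_eq_abs, abs_of_pos hr]
  have hzlow : ∀ t : ℝ, t ∈ Icc (0:ℝ) 1 →
      (r + t)/Real.sqrt 5 ≤ ‖1 + w * (1 - (t:ℂ))‖ := by
    intro t ht
    have hz : (1 : ℂ) + w * (1 - ↑t) = ↑t + ↑(r*(1-t)) * Complex.exp (↑θ * Complex.I) := by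
      rw [hw]; push_cast; ring
    rw [hz]; exact abs_lower9 r t θ hr hr1 ht.1 ht.2 hc.le
  set c5 : ℝ := Real.sqrt 5 ^ (a+1) with hc5def
  have hc5pos : 0 < c5 := Real.rpow_pos_of_pos (by positivity) _
  have hc5 : c5 = 5 ^ ((a+1)/2) := by
    rw [hc5def, Real.sqrt_eq_rpow, ← Real.rpow_mul (by norm_num : (0:ℝ) ≤ 5)]
    ring_nf
  have hpos : ∀ t ∈ Icc (0:ℝ) 1, 0 < ‖1 + w * (1 - (t:ℂ))‖ := by
    intro t ht
    refine lt_of_lt_of_le ?_ (hzlow t ht)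
    have : 0 < r + t := by nlinarith [ht.1]
    positivity
  have hcontL : ContinuousOn (fun t : ℝ => t^n / ‖1 + w * (1 - (t:ℂ))‖ ^ (a+1))
      (uIcc (0:ℝ) 1) := by
    rw [uIcc_of_le (by norm_num)]
    apply ContinuousOn.div (by fun_prop)
    · intro t ht
      apply ContinuousAt.continuousWithinAt
      have hco : Continuous (fun t : ℝ => ‖1 + w * (1 - (t:ℂ))‖) :=
        continuous_norm.comp (by fun_prop)
      exact hco.continuousAt.rpow_const (Or.inl (hpos t ht).ne')
    · intro t ht
      exact (Real.rpow_pos_of_pos (hpos t ht) _).ne'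
  have hcontR : ContinuousOn (fun t : ℝ => c5 * (t^n / (r+t)^(a+1))) (uIcc (0:ℝ) 1) := by
    rw [uIcc_of_le (by norm_num)]
    apply ContinuousOn.mul continuousOn_const
    apply ContinuousOn.div (by fun_prop)
    · intro t ht
      have hs : 0 < r + t := by nlinarith [ht.1]
      apply ContinuousAt.continuousWithinAt
      exact (by fun_prop : Continuous (fun t : ℝ => r + t)).continuousAt.rpow_const (Or.inl hs.ne')
    · intro t ht
      have hs : 0 < r + t := by nlinarith [ht.1]
      exact (Real.rpow_pos_of_pos hs _).ne'
  have step1 : (∫ t in (0:ℝ)..1, t ^ n / ‖1 + w * (1 - (t:ℂ))‖ ^ (a + 1)) ≤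
      ∫ t in (0:ℝ)..1, c5 * (t^n / (r+t)^(a+1)) := by
    apply intervalIntegral.integral_mono_on (by norm_num)
      (hcontL.intervalIntegrable) (hcontR.intervalIntegrable)
    intro t ht
    have hs : 0 < r + t := by nlinarith [ht.1]
    have hd : ((r+t)/Real.sqrt 5) ^ (a+1) ≤ ‖1 + w * (1 - (t:ℂ))‖ ^ (a+1) :=
      Real.rpow_le_rpow (by positivity) (hzlow t ht) (by linarith)
    have h1 : t^n / ‖1 + w * (1 - (t:ℂ))‖ ^ (a+1) ≤ t^n / ((r+t)/Real.sqrt 5) ^ (a+1) := by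
      exact div_le_div_of_nonneg_left (pow_nonneg ht.1 n)
        (Real.rpow_pos_of_pos (div_pos hs (by positivity)) _) hd
    refine h1.trans (le_of_eq ?_)
    rw [Real.div_rpow hs.le (Real.sqrt_nonneg 5), div_div_eq_mul_div, ← hc5def]
    ring
  have step2 : (∫ t in (0:ℝ)..1, t^n / (r+t)^(a+1)) =
      r ^ ((n:ℝ) - a) * ∫ u in (0:ℝ)..(1/(r+1)), u ^ n * (1 - u) ^ (a - n - 1) :=
    subst_lemma9 a r n hr
  have hBint := betaInt9 a n hn
  have h011 : (0:ℝ) ≤ 1/(r+1) := by positivity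
  have h012 : (1:ℝ)/(r+1) ≤ 1 := by
    rw [div_le_one (by linarith)]; linarith
  have step3 : (∫ u in (0:ℝ)..(1/(r+1)), u ^ n * (1 - u) ^ (a - n - 1)) ≤
      ∫ u in (0:ℝ)..1, u ^ n * (1 - u) ^ (a - n - 1) := by
    have hadj := intervalIntegral.integral_add_adjacent_intervals
      (hBint.mono_set (by rw [uIcc_of_le h011, uIcc_of_le (by norm_num)]; exact Icc_subset_Icc le_rfl h012))
      (hBint.mono_set (by rw [uIcc_of_le h012, uIcc_of_le (by norm_num)]; exact Icc_subset_Icc h011 le_rfl))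
    rw [← hadj]
    have : 0 ≤ ∫ u in (1/(r+1):ℝ)..1, u ^ n * (1 - u) ^ (a - n - 1) := by
      apply intervalIntegral.integral_nonneg h012
      intro u hu
      have hu0 : 0 ≤ u := le_trans h011 hu.1
      have hu1 : 0 ≤ 1 - u := by linarith [hu.2]
      exact mul_nonneg (pow_nonneg hu0 n) (Real.rpow_nonneg hu1 _)
    linarith
  have step4 := betaVal9 a n hn
  have hrp : 0 < r ^ ((n:ℝ) - a) := Real.rpow_pos_of_pos hr _
  calc (∫ t in (0:ℝ)..1, t ^ n / ‖1 + w * (1 - (t:ℂ))‖ ^ (a + 1))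
      ≤ ∫ t in (0:ℝ)..1, c5 * (t^n / (r+t)^(a+1)) := step1
    _ = c5 * ∫ t in (0:ℝ)..1, t^n / (r+t)^(a+1) := intervalIntegral.integral_const_mul _ _
    _ = c5 * (r ^ ((n:ℝ) - a) * ∫ u in (0:ℝ)..(1/(r+1)), u ^ n * (1 - u) ^ (a - n - 1)) := by
        rw [step2]
    _ ≤ c5 * (r ^ ((n:ℝ) - a) * ∫ u in (0:ℝ)..1, u ^ n * (1 - u) ^ (a - n - 1)) := by
        apply mul_le_mul_of_nonneg_left (mul_le_mul_of_nonneg_left step3 hrp.le) hc5pos.le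
    _ = (5 ^ ((a + 1) / 2) * Real.Gamma (a - n) * Real.Gamma (n + 1) / Real.Gamma (a + 1)) *
        ‖1 + w‖ ^ ((n : ℝ) - a) := by
        rw [step4, habs, ← hc5]
        ring
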